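/- arXiv:1811.06424 — 6 statements merged into one kernel-verified Lean document; each statement's English description precedes it below -/
import Mathlib

section
/- Let R₀ be a domain, H an abelian torsion-free group, and (S̄,ω̄) an (R₀,H)-crossed system. Then the crossed product R₀ ×_{(S̄,ω̄)} H is a domain. -/
/-- An `(R₀, H)`-crossed system: maps `S̄ : H → Aut(R₀)` and `ω̄ : H × H → R₀ˣ`
satisfying the normalization conditions, the twisted-homomorphism condition
`S̄(h)S̄(h') = C(ω̄(h,h'))S̄(hh')`, and the cocycle condition
`ω̄(h,h')ω̄(hh',h'') = S̄(h)(ω̄(h',h''))ω̄(h,h'h'')`. -/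
structure CrossedSystem (R₀ : Type*) (H : Type*) [Ring R₀] [Group H] where
  S : H → R₀ ≃+* R₀
  ω : H → H → R₀ˣ
  S_one : S 1 = RingEquiv.refl R₀
  ω_one_right : ∀ h, ω h 1 = 1
  ω_one_left : ∀ h, ω 1 h = 1
  S_comp : ∀ h h' r, S h (S h' r) = (ω h h' : R₀) * S (h * h') r * ((ω h h')⁻¹ : R₀ˣ)
  cocycle : ∀ h h' h'',
    (ω h h' : R₀) * (ω (h * h') h'' : R₀) = S h (ω h' h'' : R₀) * (ω h (h' * h'') : R₀)

/-- The multiplication of the crossed product `R₀ ×_{(S̄,ω̄)} H = ⊕_{h ∈ H} R₀ d_h`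
(realized as finitely supported functions `H →₀ R₀`), determined on homogeneous
elements by `(f d_h) • (f' d_{h'}) = f · S̄(h)(f') · ω̄(h,h') d_{hh'}`. -/
noncomputable def crossedMul {R₀ : Type*} {H : Type*} [Ring R₀] [Group H]
    (c : CrossedSystem R₀ H) (f g : H →₀ R₀) : H →₀ R₀ :=
  f.sum fun h r => g.sum fun h' r' => Finsupp.single (h * h') (r * c.S h r' * c.ω h h')

/-- The Mathlib (Dec 2024) definition, since removed: only `1` is of finite order. -/
def Monoid.IsTorsionFree (G : Type*) [Monoid G] : Prop :=
  ∀ g : G, g ≠ 1 → ¬IsOfFinOrder g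

theorem myUP {H : Type*} [CommGroup H] (htf : Monoid.IsTorsionFree H) : UniqueProds H := by
  have htf' : IsAddTorsionFree (Additive H) :=
    isAddTorsionFree_iff_not_isOfFinAddOrder.mpr (fun g hg => htf g hg)
  have : NoZeroSMulDivisors ℤ (Additive H) :=
    IsAddTorsionFree.to_noZeroSMulDivisors_int
  set M := Additive H
  let L := LocalizedModule (nonZeroDivisors ℤ) M
  letI : Module ℚ L := Module.compHom L (algebraMap ℚ (FractionRing ℤ))
  let f : M →+ L := AddMonoidHom.mk' (fun m => LocalizedModule.mk m 1) (by
    intro x y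
    rw [LocalizedModule.mk_add_mk]
    simp)
  have hinj : Function.Injective f := by
    intro a b hab
    obtain ⟨u, hu⟩ := (LocalizedModule.mk_eq).mp hab
    simp only [one_smul] at hu
    have hu2 : (u : ℤ) • a = (u : ℤ) • b := hu
    have hu' : (u : ℤ) • (a - b) = 0 := by rw [smul_sub, hu2, sub_self]
    have hr0 : (u : ℤ) ≠ 0 := nonZeroDivisors.ne_zero u.2
    exact sub_eq_zero.mp ((smul_eq_zero.mp hu').resolve_left hr0)
  have hus : UniqueSums M :=
    UniqueSums.of_injective_addHom f.toAddHom hinj (TwoUniqueSums.toUniqueSums L)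
  exact (MulEquiv.multiplicativeAdditive H).uniqueProds_iff.mp inferInstance

/-- If `R₀` is a domain, `H` is an abelian torsion-free group and
`(S̄,ω̄)` is an `(R₀,H)`-crossed system, then the crossed product `R₀ ×_{(S̄,ω̄)} H`
is a domain: it is nonzero and has no zero-divisors. -/
theorem statement11 {R₀ : Type*} {H : Type*} [Ring R₀] [IsDomain R₀] [CommGroup H]
    (htf : Monoid.IsTorsionFree H) (c : CrossedSystem R₀ H) :
    (Finsupp.single (1 : H) (1 : R₀) ≠ 0) ∧
    (∀ f g : H →₀ R₀, crossedMul c f g = 0 → f = 0 ∨ g = 0) := by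
  classical
  have hup : UniqueProds H := myUP htf
  refine ⟨fun h => (one_ne_zero : (1:R₀) ≠ 0) (Finsupp.single_eq_zero.mp h), fun f g h0 => ?_⟩
  by_contra hc
  push_neg at hc
  obtain ⟨hf, hg⟩ := hc
  have hA : f.support.Nonempty := Finsupp.support_nonempty_iff.mpr hf
  have hB : g.support.Nonempty := Finsupp.support_nonempty_iff.mpr hg
  obtain ⟨a0, ha, b0, hb, hu⟩ := UniqueProds.uniqueMul_of_nonempty hA hB
  have key : (crossedMul c f g) (a0 * b0) = f a0 * c.S a0 (g b0) * c.ω a0 b0 := by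
    rw [crossedMul, Finsupp.sum_apply]
    rw [Finsupp.sum, Finset.sum_eq_single a0]
    · rw [Finsupp.sum_apply, Finsupp.sum, Finset.sum_eq_single b0]
      · rw [Finsupp.single_apply, if_pos rfl]
      · intro b hbmem hbne
        rw [Finsupp.single_apply, if_neg]
        intro he
        exact hbne (hu ha hbmem he).2
      · intro hnb
        exact absurd hb hnb
    · intro a hamem hane
      rw [Finsupp.sum_apply, Finsupp.sum]
      apply Finset.sum_eq_zero
      intro b hbmem
      rw [Finsupp.single_apply, if_neg]
      intro he
      exact hane (hu hamem hbmem he).1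
    · intro hna
      exact absurd ha hna
  have hne : (crossedMul c f g) (a0 * b0) ≠ 0 := by
    rw [key]
    refine (Units.mul_left_eq_zero (c.ω a0 b0)).not.mpr ?_
    exact mul_ne_zero (Finsupp.mem_support_iff.mp ha)
      (fun hz => Finsupp.mem_support_iff.mp hb ((c.S a0).injective (by simpa using hz)))
  rw [h0] at hne
  exact hne rfl
end

section
/- Let R₀ be a domain, H an abelian torsion-free group, and (S̄,ω̄) an (R₀,H)-crossed system. Then every unit of the crossed product R₀ ×_{(S̄,ω̄)} H is homogeneous, i.e., of the form f d_h with f ∈ R₀^× and h ∈ H. -/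
/-- A torsion-free commutative group has `TwoUniqueProds`. -/
theorem twoUniqueProds_of_isTorsionFree {H : Type*} [CommGroup H]
    (htf : ∀ g : H, g ≠ 1 → ¬IsOfFinOrder g) : TwoUniqueProds H := by
  have htfa : IsAddTorsionFree (Additive H) := by
    refine isAddTorsionFree_iff_not_isOfFinAddOrder.mpr ?_
    intro g hg hfin
    exact htf (Additive.toMul g) hg (isOfFinAddOrder_ofMul_iff.mp hfin)
  haveI : NoZeroSMulDivisors ℤ (Additive H) :=
    IsAddTorsionFree.to_noZeroSMulDivisors_int
  set M := Additive H
  set S := nonZeroDivisors ℤ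
  set Q := LocalizedModule S M with hQ
  let φ : AddHom M Q :=
    ⟨fun m => LocalizedModule.mk m 1, by
      intro a b
      rw [LocalizedModule.mk_add_mk]
      simp⟩
  have hinj : Function.Injective φ := by
    intro a b hab
    have : LocalizedModule.mk a (1 : S) = LocalizedModule.mk b 1 := hab
    rw [LocalizedModule.mk_eq] at this
    obtain ⟨u, hu⟩ := this
    simp only [one_smul] at hu
    have : (u : ℤ) • (a - b) = 0 := by
      have hu' : (u : ℤ) • a = (u : ℤ) • b := hu
      rw [smul_sub, hu', sub_self]
    rcases smul_eq_zero.mp this with h | h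
    · exact absurd h (nonZeroDivisors.coe_ne_zero u)
    · exact sub_eq_zero.mp h
  letI : Module ℚ Q :=
    Module.compHom Q ((FractionRing.algEquiv ℤ ℚ).symm.toRingEquiv.toRingHom)
  haveI : TwoUniqueSums Q := inferInstance
  haveI : TwoUniqueSums M :=
    TwoUniqueSums.of_injective_addHom φ hinj inferInstance
  exact ⟨TwoUniqueSums.uniqueAdd_of_one_lt_card (G := M)⟩

lemma crossedMul_apply' {R₀ : Type*} {H : Type*} [Ring R₀] [Group H] [DecidableEq H]
    (c : CrossedSystem R₀ H) (f g : H →₀ R₀) (t : H) :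
    crossedMul c f g t = ∑ p ∈ f.support ×ˢ g.support,
      if p.1 * p.2 = t then f p.1 * c.S p.1 (g p.2) * c.ω p.1 p.2 else 0 := by
  rw [crossedMul, Finsupp.sum_apply, Finsupp.sum, Finset.sum_product]
  refine Finset.sum_congr rfl fun h hh => ?_
  rw [Finsupp.sum_apply, Finsupp.sum]
  refine Finset.sum_congr rfl fun h' hh' => ?_
  rw [Finsupp.single_apply]

lemma crossedMul_apply_uniqueMul {R₀ : Type*} {H : Type*} [Ring R₀] [Group H]
    (c : CrossedSystem R₀ H) (f g : H →₀ R₀) {a b : H}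
    (ha : a ∈ f.support) (hb : b ∈ g.support)
    (hu : UniqueMul f.support g.support a b) :
    crossedMul c f g (a * b) = f a * c.S a (g b) * c.ω a b := by
  classical
  rw [crossedMul_apply']
  rw [Finset.sum_eq_single_of_mem (a, b) (Finset.mem_product.mpr ⟨ha, hb⟩)]
  · simp
  · rintro ⟨x, y⟩ hxy hne
    rw [Finset.mem_product] at hxy
    rw [if_neg]
    intro hxyab
    obtain ⟨rfl, rfl⟩ := hu hxy.1 hxy.2 hxyab
    exact hne rfl

/-- If `R₀` is a domain, `H` is an abelian torsion-free group and
`(S̄,ω̄)` is an `(R₀,H)`-crossed system, then every unit of the crossed product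
`R₀ ×_{(S̄,ω̄)} H` (an element with a two-sided inverse for `crossedMul`, whose
identity is `d_e = single 1 1`) is homogeneous, i.e. of the form `f d_h` with
`f ∈ R₀ˣ` and `h ∈ H`. -/
theorem statement12 {R₀ : Type*} {H : Type*} [Ring R₀] [IsDomain R₀] [CommGroup H]
    (htf : ∀ g : H, g ≠ 1 → ¬IsOfFinOrder g) (c : CrossedSystem R₀ H)
    (f g : H →₀ R₀) (hfg : crossedMul c f g = Finsupp.single 1 1)
    (hgf : crossedMul c g f = Finsupp.single 1 1) :
    ∃ (h : H) (r : R₀), IsUnit r ∧ f = Finsupp.single h r := by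
  classical
  haveI : TwoUniqueProds H := twoUniqueProds_of_isTorsionFree htf
  -- f and g are nonzero
  have hone : (Finsupp.single 1 1 : H →₀ R₀) ≠ 0 := by
    simp [Finsupp.single_eq_zero]
  have hf0 : f ≠ 0 := by
    rintro rfl
    refine hone ?_
    rw [← hfg, crossedMul]
    simp [Finsupp.sum_zero_index]
  have hg0 : g ≠ 0 := by
    rintro rfl
    refine hone ?_
    rw [← hfg, crossedMul]
    simp [Finsupp.sum_zero_index]
  -- the coefficient attached to a unique product is nonzero
  have hcoef : ∀ (a b : H), a ∈ f.support → b ∈ g.support →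
      f a * c.S a (g b) * c.ω a b ≠ 0 := by
    intro a b ha hb
    have h1 : f a ≠ 0 := Finsupp.mem_support_iff.mp ha
    have h2 : c.S a (g b) ≠ 0 := by
      intro h
      exact Finsupp.mem_support_iff.mp hb (by
        have := congrArg (c.S a).symm h
        simpa using this)
    exact mul_ne_zero (mul_ne_zero h1 h2) (c.ω a b).ne_zero
  -- supports are singletons
  have hcard : f.support.card * g.support.card ≤ 1 := by
    by_contra hlt
    push_neg at hlt
    obtain ⟨p1, h1, p2, h2, hne, hu1, hu2⟩ :=
      TwoUniqueProds.uniqueMul_of_one_lt_card hlt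
    rw [Finset.mem_product] at h1 h2
    have key : ∀ (p : H × H), p.1 ∈ f.support → p.2 ∈ g.support →
        UniqueMul f.support g.support p.1 p.2 → p.1 * p.2 = 1 := by
      intro p hp1 hp2 hu
      have hne0 : crossedMul c f g (p.1 * p.2) ≠ 0 := by
        rw [crossedMul_apply_uniqueMul c f g hp1 hp2 hu]
        exact hcoef _ _ hp1 hp2
      rw [hfg, Finsupp.single_apply] at hne0
      by_contra hne1
      exact hne0 (if_neg (fun h => hne1 h.symm))
    have e1 := key p1 h1.1 h1.2 hu1
    have e2 := key p2 h2.1 h2.2 hu2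
    obtain ⟨ea, eb⟩ := hu1 h2.1 h2.2 (e2.trans e1.symm)
    exact hne (Prod.ext ea.symm eb.symm).symm.symm
  have hfs : f.support.card = 1 := by
    have h1 : 1 ≤ f.support.card := Finset.card_pos.mpr (Finsupp.support_nonempty_iff.mpr hf0)
    have h2 : 1 ≤ g.support.card := Finset.card_pos.mpr (Finsupp.support_nonempty_iff.mpr hg0)
    nlinarith
  have hgs : g.support.card = 1 := by
    have h1 : 1 ≤ f.support.card := Finset.card_pos.mpr (Finsupp.support_nonempty_iff.mpr hf0)
    have h2 : 1 ≤ g.support.card := Finset.card_pos.mpr (Finsupp.support_nonempty_iff.mpr hg0)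
    nlinarith
  obtain ⟨a, ha⟩ := Finset.card_eq_one.mp hfs
  obtain ⟨b, hb⟩ := Finset.card_eq_one.mp hgs
  obtain ⟨hfa, hfeq⟩ := Finsupp.support_eq_singleton.mp ha
  obtain ⟨hgb, hgeq⟩ := Finsupp.support_eq_singleton.mp hb
  have hma : a ∈ f.support := by rw [ha]; exact Finset.mem_singleton_self a
  have hmb : b ∈ g.support := by rw [hb]; exact Finset.mem_singleton_self b
  have hua : UniqueMul f.support g.support a b := by
    rw [ha, hb]
    intro x y hx hy _
    exact ⟨Finset.mem_singleton.mp hx, Finset.mem_singleton.mp hy⟩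
  have hub : UniqueMul g.support f.support b a := by
    rw [ha, hb]
    intro x y hx hy _
    exact ⟨Finset.mem_singleton.mp hx, Finset.mem_singleton.mp hy⟩
  -- a * b = 1 and the coefficient equations
  have hval1 := crossedMul_apply_uniqueMul c f g hma hmb hua
  have hval2 := crossedMul_apply_uniqueMul c g f hmb hma hub
  have hab : a * b = 1 := by
    by_contra hne1
    have := hcoef a b hma hmb
    rw [← hval1, hfg, Finsupp.single_apply, if_neg (fun h => hne1 h.symm)] at this
    exact this rfl
  have heq1 : f a * c.S a (g b) * c.ω a b = 1 := by
    rw [← hval1, hfg, hab, Finsupp.single_apply, if_pos rfl]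
  have heq2 : g b * c.S b (f a) * c.ω b a = 1 := by
    rw [← hval2, hgf, mul_comm b a, hab, Finsupp.single_apply, if_pos rfl]
  -- f a is a unit
  refine ⟨a, f a, ?_, hfeq⟩
  set r := f a
  set x := c.S a (g b) * (c.ω a b : R₀) with hx
  have hrx : r * x = 1 := by rw [hx, ← mul_assoc]; exact heq1
  have h2 : g b * c.S b r = ((c.ω b a)⁻¹ : R₀ˣ) := by
    have := congrArg (fun z : R₀ => z * ((c.ω b a)⁻¹ : R₀ˣ)) heq2
    simpa [mul_assoc] using this
  have h3 : ((c.ω b a : R₀) * g b) * c.S b r = 1 := by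
    rw [mul_assoc, h2]
    exact (c.ω b a).mul_inv
  have hL : (c.S b).symm ((c.ω b a : R₀) * g b) * r = 1 := by
    have := congrArg (c.S b).symm h3
    simpa [map_mul] using this
  have hxr : x * r = 1 := by
    have : (c.S b).symm ((c.ω b a : R₀) * g b) = x := by
      calc (c.S b).symm ((c.ω b a : R₀) * g b)
          = (c.S b).symm ((c.ω b a : R₀) * g b) * (r * x) := by rw [hrx, mul_one]
        _ = ((c.S b).symm ((c.ω b a : R₀) * g b) * r) * x := by rw [mul_assoc]
        _ = x := by rw [hL, one_mul]
    rw [← this]; exact hL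
  exact ⟨⟨r, x, hrx, hxr⟩, rfl⟩
end

section
/- Let 1 → N → G → H → 1 be a group extension where ℂ[N] is a domain and H is abelian and torsion-free. Then ℂ[G] is a domain. In particular, the only idempotents of ℂ[G] are 0 and 1. -/
open Finset in
lemma aux_uniqueProds {H : Type*} [CommGroup H] (htf : ∀ g : H, g ≠ 1 → ¬IsOfFinOrder g) :
    UniqueProds H := by
  constructor
  intro A B hA hB
  classical
  set S := Subgroup.closure ((A ∪ B : Finset H) : Set H) with hSdef
  have hmemA : ∀ a ∈ A, a ∈ S := fun a ha => Subgroup.subset_closure (by simp [ha])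
  have hmemB : ∀ b ∈ B, b ∈ S := fun b hb => Subgroup.subset_closure (by simp [hb])
  haveI : Group.FG ↥S := Group.closure_finset_fg _
  haveI : IsMulTorsionFree H := IsMulTorsionFree.of_not_isOfFinOrder (fun a ha => htf a ha)
  haveI h1 : IsMulTorsionFree ↥S := inferInstance
  haveI h2 : IsAddTorsionFree (Additive ↥S) := inferInstance
  haveI : Module.IsTorsionFree ℤ (Additive ↥S) := Module.isTorsionFree_int_iff_isAddTorsionFree.mpr h2
  haveI : Module.Finite ℤ (Additive ↥S) := Module.Finite.iff_addGroup_fg.mpr inferInstance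
  haveI : Module.Free ℤ (Additive ↥S) := Module.free_of_finite_type_torsion_free'
  haveI : UniqueSums ℤ := inferInstance
  haveI : UniqueSums (Module.Free.ChooseBasisIndex ℤ (Additive ↥S) → ℤ) := inferInstance
  haveI : UniqueSums (Module.Free.ChooseBasisIndex ℤ (Additive ↥S) →₀ ℤ) :=
    UniqueSums.of_injective_addHom (Finsupp.coeFnAddHom.toAddHom)
      (DFunLike.coe_injective) inferInstance
  haveI hus : UniqueSums (Additive ↥S) :=
    UniqueSums.of_injective_addHom
      ((Module.Free.chooseBasis ℤ (Additive ↥S)).repr.toAddMonoidHom.toAddHom)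
      (Module.Free.chooseBasis ℤ (Additive ↥S)).repr.injective inferInstance
  haveI : UniqueProds (Multiplicative (Additive ↥S)) := inferInstance
  haveI hup : UniqueProds ↥S :=
    UniqueProds.of_injective_mulHom
      (⟨fun x => Multiplicative.ofAdd (Additive.ofMul x), fun _ _ => rfl⟩ :
        ↥S →ₙ* Multiplicative (Additive ↥S))
      (fun _ _ h => h) inferInstance
  -- now transfer the unique product pair
  set A' : Finset ↥S := A.preimage Subtype.val Subtype.val_injective.injOn with hA'
  set B' : Finset ↥S := B.preimage Subtype.val Subtype.val_injective.injOn with hB'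
  obtain ⟨a, ha⟩ := hA
  obtain ⟨b, hb⟩ := hB
  have hA'ne : A'.Nonempty := ⟨⟨a, hmemA a ha⟩, by simp [hA', ha]⟩
  have hB'ne : B'.Nonempty := ⟨⟨b, hmemB b hb⟩, by simp [hB', hb]⟩
  obtain ⟨a0, ha0, b0, hb0, hu⟩ := hup.uniqueMul_of_nonempty hA'ne hB'ne
  rw [hA', Finset.mem_preimage] at ha0
  rw [hB', Finset.mem_preimage] at hb0
  refine ⟨a0, ha0, b0, hb0, ?_⟩
  intro x y hx hy hxy
  have hx' : (⟨x, hmemA x hx⟩ : ↥S) ∈ A' := by simp [hA', hx]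
  have hy' : (⟨y, hmemB y hy⟩ : ↥S) ∈ B' := by simp [hB', hy]
  have : (⟨x, hmemA x hx⟩ : ↥S) * ⟨y, hmemB y hy⟩ = a0 * b0 := by
    ext; simpa using hxy
  obtain ⟨e1, e2⟩ := hu hx' hy' this
  exact ⟨congrArg Subtype.val e1, congrArg Subtype.val e2⟩


open MonoidAlgebra in
lemma aux_coset {N G H : Type*} [Group N] [Group G] [CommGroup H]
    (i : N →* G) (q : G →* H) (hi : Function.Injective i)
    (hexact : i.range = q.ker)
    (hdom : IsDomain (MonoidAlgebra ℂ N))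
    {f g : MonoidAlgebra ℂ G} (hf : f ≠ 0) (hg : g ≠ 0)
    {cx cy : H}
    (hfs : ∀ a ∈ f.coeff.support, q a = cx) (hgs : ∀ b ∈ g.coeff.support, q b = cy) :
    f * g ≠ 0 := by
  classical
  haveI := hdom
  have unit_mul : ∀ (c : G) (X : MonoidAlgebra ℂ G), X ≠ 0 → single c (1:ℂ) * X ≠ 0 := by
    intro c X hX h
    apply hX
    have := congrArg (fun Z => single c⁻¹ (1:ℂ) * Z) h
    simpa [← mul_assoc, single_mul_single, ← MonoidAlgebra.one_def] using this
  have mul_unit : ∀ (c : G) (X : MonoidAlgebra ℂ G), X ≠ 0 → X * single c (1:ℂ) ≠ 0 := by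
    intro c X hX h
    apply hX
    have := congrArg (fun Z => Z * single c⁻¹ (1:ℂ)) h
    simpa [mul_assoc, single_mul_single, ← MonoidAlgebra.one_def] using this
  obtain ⟨x, hxs⟩ := Finsupp.support_nonempty_iff.mpr (MonoidAlgebra.coeff_eq_zero.not.mpr hf)
  obtain ⟨y, hys⟩ := Finsupp.support_nonempty_iff.mpr (MonoidAlgebra.coeff_eq_zero.not.mpr hg)
  set φ := MonoidAlgebra.mapDomainRingHom ℂ i with hφ
  have hφinj : Function.Injective φ := MonoidAlgebra.mapDomain_injective hi
  set f' := single x⁻¹ (1:ℂ) * f with hf'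
  set g' := g * single y⁻¹ (1:ℂ) with hg'
  have hf'0 : f' ≠ 0 := unit_mul _ _ hf
  have hg'0 : g' ≠ 0 := mul_unit _ _ hg
  have hf'supp : ↑f'.coeff.support ⊆ Set.range i := by
    intro a ha
    simp only [Finset.coe_sort_coe, Finsupp.mem_support_iff, Finset.mem_coe] at ha
    rw [hf'] at ha
    rw [coeff_single_mul_apply] at ha
    simp only [inv_inv, one_mul] at ha
    have hmem : x * a ∈ f.coeff.support := Finsupp.mem_support_iff.mpr ha
    have h1 : q x * q a = cx := by rw [← map_mul]; exact hfs _ hmem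
    have h2 : q x = cx := hfs _ hxs
    have h3 : q a = 1 := by
      have := h1; rw [h2] at this
      exact mul_left_cancel (a := cx) (by rw [this, mul_one])
    have : a ∈ q.ker := h3
    rw [← hexact] at this
    exact this
  have hg'supp : ↑g'.coeff.support ⊆ Set.range i := by
    intro b hb
    simp only [Finset.coe_sort_coe, Finsupp.mem_support_iff, Finset.mem_coe] at hb
    rw [hg'] at hb
    rw [coeff_mul_single_apply] at hb
    simp only [inv_inv, mul_one] at hb
    have hmem : b * y ∈ g.coeff.support := Finsupp.mem_support_iff.mpr hb
    have h1 : q b * q y = cy := by rw [← map_mul]; exact hgs _ hmem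
    have h2 : q y = cy := hgs _ hys
    have h3 : q b = 1 := by
      have := h1; rw [h2] at this
      exact mul_right_cancel (b := cy) (by rw [this, one_mul])
    have : b ∈ q.ker := h3
    rw [← hexact] at this
    exact this
  set a' : MonoidAlgebra ℂ N := MonoidAlgebra.comapDomain (⇑i) hi f' with ha'
  set b' : MonoidAlgebra ℂ N := MonoidAlgebra.comapDomain (⇑i) hi g' with hb'
  have hfa : φ a' = f' := MonoidAlgebra.mapDomain_comapDomain hf'supp hi
  have hgb : φ b' = g' := MonoidAlgebra.mapDomain_comapDomain hg'supp hi
  have ha0 : a' ≠ 0 := fun h => hf'0 (by rw [← hfa, h, map_zero])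
  have hb0 : b' ≠ 0 := fun h => hg'0 (by rw [← hgb, h, map_zero])
  have hab : f' * g' ≠ 0 := by
    rw [← hfa, ← hgb, ← map_mul]
    intro h
    exact mul_ne_zero ha0 hb0 (hφinj (h.trans (map_zero φ).symm))
  have e1 : single x (1:ℂ) * f' = f := by
    rw [hf', ← mul_assoc, single_mul_single]
    simp [← MonoidAlgebra.one_def]
  have e2 : g' * single y (1:ℂ) = g := by
    rw [hg', mul_assoc, single_mul_single]
    simp [← MonoidAlgebra.one_def]
  have key : f * g = single x (1:ℂ) * (f' * g') * single y (1:ℂ) := by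
    rw [← mul_assoc, mul_assoc (single x (1:ℂ)) f' g', ← mul_assoc, e1, mul_assoc, e2]
  rw [key]
  exact mul_unit _ _ (unit_mul _ _ hab)


/-- Let `1 → N → G → H → 1` be a group extension where the complex group
ring `ℂ[N]` is a domain and `H` is abelian and torsion-free.  Then `ℂ[G]` is a domain;
in particular, the only idempotents of `ℂ[G]` are `0` and `1`. -/
theorem statement13 {N G H : Type*} [Group N] [Group G] [CommGroup H]
    (i : N →* G) (q : G →* H) (hi : Function.Injective i)
    (hq : Function.Surjective q) (hexact : i.range = q.ker)
    (htf : ∀ g : H, g ≠ 1 → ¬IsOfFinOrder g)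
    (hdom : IsDomain (MonoidAlgebra ℂ N)) :
    IsDomain (MonoidAlgebra ℂ G) ∧
    ∀ f : MonoidAlgebra ℂ G, f * f = f → f = 0 ∨ f = 1 := by
  have aux_uniqueProds : UniqueProds H := aux_uniqueProds htf
  have aux_coset : ∀ {f g : MonoidAlgebra ℂ G}, f ≠ 0 → g ≠ 0 → ∀ {cx cy : H},
      (∀ a ∈ f.coeff.support, q a = cx) → (∀ b ∈ g.coeff.support, q b = cy) → f * g ≠ 0 :=
    by intro f g hf hg cx cy hfs hgs; exact aux_coset i q hi hexact hdom hf hg hfs hgs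

  classical
  have hnzd : ∀ f g : MonoidAlgebra ℂ G, f ≠ 0 → g ≠ 0 → f * g ≠ 0 := by
    intro f g hf hg hfg
    set A := f.coeff.support.image q with hA
    set B := g.coeff.support.image q with hB
    have hAne : A.Nonempty := (Finsupp.support_nonempty_iff.mpr (MonoidAlgebra.coeff_eq_zero.not.mpr hf)).image _
    have hBne : B.Nonempty := (Finsupp.support_nonempty_iff.mpr (MonoidAlgebra.coeff_eq_zero.not.mpr hg)).image _
    obtain ⟨a0, ha0, b0, hb0, hu⟩ := aux_uniqueProds.uniqueMul_of_nonempty hAne hBne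
    set f1 : MonoidAlgebra ℂ G := MonoidAlgebra.ofCoeff (f.coeff.filter (fun z => q z = a0)) with hf1
    set f2 : MonoidAlgebra ℂ G := MonoidAlgebra.ofCoeff (f.coeff.filter (fun z => ¬ q z = a0)) with hf2
    set g1 : MonoidAlgebra ℂ G := MonoidAlgebra.ofCoeff (g.coeff.filter (fun z => q z = b0)) with hg1
    set g2 : MonoidAlgebra ℂ G := MonoidAlgebra.ofCoeff (g.coeff.filter (fun z => ¬ q z = b0)) with hg2
    have hfsplit : f1 + f2 = f := MonoidAlgebra.coeff_injective (Finsupp.filter_pos_add_filter_neg f.coeff _)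
    have hgsplit : g1 + g2 = g := MonoidAlgebra.coeff_injective (Finsupp.filter_pos_add_filter_neg g.coeff _)
    have hf1s : ∀ z ∈ f1.coeff.support, q z = a0 := by
      intro z hz; rw [hf1, MonoidAlgebra.coeff_ofCoeff, Finsupp.support_filter, Finset.mem_filter] at hz; exact hz.2
    have hg1s : ∀ z ∈ g1.coeff.support, q z = b0 := by
      intro z hz; rw [hg1, MonoidAlgebra.coeff_ofCoeff, Finsupp.support_filter, Finset.mem_filter] at hz; exact hz.2
    have hf10 : f1 ≠ 0 := by
      obtain ⟨a, ha, hqa⟩ := Finset.mem_image.mp ha0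
      intro h
      have h2 : f1.coeff a = f.coeff a := by rw [hf1, MonoidAlgebra.coeff_ofCoeff, Finsupp.filter_apply, if_pos hqa]
      rw [h] at h2
      exact (Finsupp.mem_support_iff.mp ha) h2.symm
    have hg10 : g1 ≠ 0 := by
      obtain ⟨b, hb, hqb⟩ := Finset.mem_image.mp hb0
      intro h
      have h2 : g1.coeff b = g.coeff b := by rw [hg1, MonoidAlgebra.coeff_ofCoeff, Finsupp.filter_apply, if_pos hqb]
      rw [h] at h2
      exact (Finsupp.mem_support_iff.mp hb) h2.symm
    have hkey : ∀ z ∈ (f1 * g1).coeff.support, q z = a0 * b0 := by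
      intro z hz
      obtain ⟨u, hu', v, hv', rfl⟩ := Finset.mem_mul.mp (MonoidAlgebra.support_coeff_mul_subset f1 g1 hz)
      rw [map_mul, hf1s u hu', hg1s v hv']
    have hrest : ∀ z ∈ (f1 * g2 + f2 * g).coeff.support, q z ≠ a0 * b0 := by
      intro z hz hqz
      have hz' := Finsupp.support_add (by rw [MonoidAlgebra.coeff_add] at hz; exact hz)
      rw [Finset.mem_union] at hz'
      rcases hz' with hz' | hz'
      · obtain ⟨u, hu', v, hv', rfl⟩ := Finset.mem_mul.mp (MonoidAlgebra.support_coeff_mul_subset f1 g2 hz')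
        rw [hg2, MonoidAlgebra.coeff_ofCoeff, Finsupp.support_filter, Finset.mem_filter] at hv'
        have hvB : q v ∈ B := Finset.mem_image_of_mem q hv'.1
        have huA : q u ∈ A := by
          rw [hf1, MonoidAlgebra.coeff_ofCoeff, Finsupp.support_filter, Finset.mem_filter] at hu'
          exact Finset.mem_image_of_mem q hu'.1
        have := hu huA hvB (by rw [← map_mul]; exact hqz)
        exact hv'.2 this.2
      · obtain ⟨u, hu', v, hv', rfl⟩ := Finset.mem_mul.mp (MonoidAlgebra.support_coeff_mul_subset f2 g hz')
        rw [hf2, MonoidAlgebra.coeff_ofCoeff, Finsupp.support_filter, Finset.mem_filter] at hu'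
        have huA : q u ∈ A := Finset.mem_image_of_mem q hu'.1
        have hvB : q v ∈ B := Finset.mem_image_of_mem q hv'
        have := hu huA hvB (by rw [← map_mul]; exact hqz)
        exact hu'.2 this.1
    have hdecomp : f * g = f1 * g1 + (f1 * g2 + f2 * g) := by
      conv_lhs => rw [← hfsplit, add_mul]
      conv_lhs => rw [← hgsplit, mul_add]
      rw [hgsplit, add_assoc]
    have hzero : f1 * g1 = 0 := by
      have h0 : f1 * g1 + (f1 * g2 + f2 * g) = 0 := by rw [← hdecomp]; exact hfg
      ext z
      by_cases hc : q z = a0 * b0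
      · have h1 : (f1 * g2 + f2 * g).coeff z = 0 :=
          Finsupp.notMem_support_iff.mp (fun hm => hrest z hm hc)
        have h2 : (f1 * g1).coeff z + (f1 * g2 + f2 * g).coeff z = 0 := by
          rw [← Finsupp.add_apply, ← MonoidAlgebra.coeff_add, h0]; rfl
        rw [h1, add_zero] at h2
        simpa using h2
      · simpa using Finsupp.notMem_support_iff.mp (fun hm => hc (hkey z hm))
    exact aux_coset hf10 hg10 hf1s hg1s hzero
  haveI : NoZeroDivisors (MonoidAlgebra ℂ G) := by
    constructor
    intro a b h
    by_contra hc
    push_neg at hc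
    exact hnzd a b hc.1 hc.2 h
  have hd : IsDomain (MonoidAlgebra ℂ G) := NoZeroDivisors.to_isDomain _
  refine ⟨hd, fun f hff => ?_⟩
  have h0 : f * (f - 1) = 0 := by rw [mul_sub, mul_one, hff, sub_self]
  rcases mul_eq_zero.mp h0 with h | h
  · exact Or.inl h
  · exact Or.inr (sub_eq_zero.mp h)
end

section
/- The complex group algebra ℂ[H₃] of the discrete Heisenberg group H₃ is a domain, and consequently has no idempotents other than 0 and 1. -/
/-- The automorphism `(m,n) ↦ (m, m+n)` of `ℤ²` (written multiplicatively). -/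
def heisAut : MulAut (Multiplicative (ℤ × ℤ)) :=
  AddEquiv.toMultiplicative
    { toFun := fun p => (p.1, p.1 + p.2)
      invFun := fun p => (p.1, p.2 - p.1)
      left_inv := fun p => by simp
      right_inv := fun p => by simp
      map_add' := fun p q => by
        simp [Prod.ext_iff]
        ring }

/-- The action `S : ℤ → Aut(ℤ²)`, `S(k)(m,n) = (m, km+n)`, i.e. `k ↦ heisAut^k`. -/
def heisAction : Multiplicative ℤ →* MulAut (Multiplicative (ℤ × ℤ)) :=
  zpowersHom _ heisAut

/-- The discrete Heisenberg group `H₃`, realized as the semidirect product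
`ℤ² ⋊_S ℤ` with `S(k)(m,n) = (m, km+n)`. -/
def Heisenberg : Type := SemidirectProduct (Multiplicative (ℤ × ℤ)) (Multiplicative ℤ) heisAction

instance : Group Heisenberg := SemidirectProduct.instGroup

lemma heisAut_apply (p : Multiplicative (ℤ × ℤ)) :
    (heisAut p).toAdd = (p.toAdd.1, p.toAdd.1 + p.toAdd.2) := rfl

lemma heisAut_inv_apply (p : Multiplicative (ℤ × ℤ)) :
    (heisAut⁻¹ p).toAdd = (p.toAdd.1, p.toAdd.2 - p.toAdd.1) := rfl

lemma heisAut_zpow (k : ℤ) (p : Multiplicative (ℤ × ℤ)) :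
    ((heisAut ^ k) p).toAdd = (p.toAdd.1, k * p.toAdd.1 + p.toAdd.2) := by
  induction k using Int.induction_on with
  | zero => simp
  | succ k ih =>
      have : (heisAut ^ ((k : ℤ) + 1)) p = heisAut ((heisAut ^ (k : ℤ)) p) := by
        rw [add_comm, zpow_add, zpow_one]; rfl
      rw [this, heisAut_apply, ih, Prod.ext_iff]
      constructor <;> simp <;> ring
  | pred k ih =>
      have : (heisAut ^ (-(k : ℤ) - 1)) p = heisAut⁻¹ ((heisAut ^ (-(k : ℤ))) p) := by
        rw [sub_eq_add_neg, add_comm, zpow_add, zpow_neg_one]; rfl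
      rw [this, heisAut_inv_apply, ih, Prod.ext_iff]
      constructor <;> simp <;> ring

/-- key multiplication formula -/
lemma heis_mul (a b : Heisenberg) :
    ((a * b).right.toAdd = a.right.toAdd + b.right.toAdd) ∧
    ((a * b).left.toAdd.1 = a.left.toAdd.1 + b.left.toAdd.1) ∧
    ((a * b).left.toAdd.2 = a.left.toAdd.2 + (a.right.toAdd * b.left.toAdd.1 + b.left.toAdd.2)) := by
  have h1 : (a * b).right = a.right * b.right := rfl
  have h2 : (a * b).left = a.left * (heisAction a.right) b.left := rfl
  have h3 : (heisAction a.right) b.left = (heisAut ^ a.right.toAdd) b.left := rfl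
  refine ⟨rfl, ?_, ?_⟩ <;>
  · rw [h2]
    have : (a.left * (heisAction a.right) b.left).toAdd
        = a.left.toAdd + ((heisAction a.right) b.left).toAdd := rfl
    rw [this, h3, heisAut_zpow]
    simp

def heisEmb (g : Heisenberg) : ℤ ×ₗ (ℤ ×ₗ ℤ) :=
  toLex (g.right.toAdd, toLex (g.left.toAdd.1, g.left.toAdd.2))

lemma heisEmb_inj : Function.Injective heisEmb := by
  intro a b h
  unfold heisEmb at h
  have h' := toLex.injective h
  have h1 : a.right.toAdd = b.right.toAdd := congrArg Prod.fst h'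
  have h2 := toLex.injective (congrArg Prod.snd h')
  have h3 : a.left.toAdd = b.left.toAdd :=
    Prod.ext (congrArg Prod.fst h2) (congrArg Prod.snd h2)
  exact SemidirectProduct.ext (Multiplicative.toAdd.injective h3)
    (Multiplicative.toAdd.injective h1)

noncomputable instance : LinearOrder Heisenberg := LinearOrder.lift' heisEmb heisEmb_inj

lemma heis_lt_iff (a b : Heisenberg) : a < b ↔ heisEmb a < heisEmb b := Iff.rfl

instance : CovariantClass Heisenberg Heisenberg (Function.swap (· * ·)) (· < ·) := by
  constructor
  intro z x y hxy
  rw [heis_lt_iff] at hxy ⊢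
  unfold heisEmb at hxy ⊢
  rw [Prod.Lex.lt_iff] at hxy ⊢
  obtain ⟨m1, m2, m3⟩ := heis_mul x z
  obtain ⟨n1, n2, n3⟩ := heis_mul y z
  simp only [Function.swap, m1, m2, m3, n1, n2, n3]
  rcases hxy with h | ⟨h, h2⟩
  · exact Or.inl (by simpa using h)
  · refine Or.inr ⟨by simpa using h, ?_⟩
    rw [Prod.Lex.lt_iff] at h2 ⊢
    simp only [ofLex_toLex] at h2 ⊢
    rcases h2 with h2 | ⟨h2, h3⟩
    · exact Or.inl (by omega)
    · refine Or.inr ⟨by omega, ?_⟩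
      simp only [ofLex_toLex] at h
      rw [h]
      omega

instance : UniqueProds Heisenberg := inferInstance

/-- The complex group algebra `ℂ[H₃]` of the discrete Heisenberg group
`H₃` is a domain; consequently its only idempotents are `0` and `1`. -/
theorem statement14 :
    IsDomain (MonoidAlgebra ℂ Heisenberg) ∧
    ∀ f : MonoidAlgebra ℂ Heisenberg, f * f = f → f = 0 ∨ f = 1 := by
  have hdom : IsDomain (MonoidAlgebra ℂ Heisenberg) := NoZeroDivisors.to_isDomain _
  refine ⟨hdom, fun f hf => ?_⟩
  have h0 : f * (f - 1) = 0 := by rw [mul_sub, mul_one, hf, sub_self]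
  rcases mul_eq_zero.mp h0 with h | h
  · exact Or.inl h
  · exact Or.inr (sub_eq_zero.mp h)
end

section
/- Let G be a group, N a normal subgroup, H = G/N with normalized section σ. On the crossed product ℂ[N] ×_{(S,ω)} H define the involution on homogeneous elements by (f d_h)* = ω̄(h⁻¹,h)⁻¹ ⋆ S̄(h⁻¹)(f*) d_{h⁻¹}, where f* is the usual involution on ℂ[N]. Then the isomorphism Φ : ℂ[G] → ℂ[N] ×_{(S,ω)} H satisfies Φ(x*) = Φ(x)* for all x ∈ ℂ[G], i.e., Φ is a *-isomorphism. -/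
section

variable {G : Type*} [Group G] (N : Subgroup G) [N.Normal]

/-- The natural involution `(Σ f_g δ_g)* = Σ conj(f_g) δ_{g⁻¹}` on a complex group ring. -/
noncomputable def grStar {Γ : Type*} [Group Γ] (f : MonoidAlgebra ℂ Γ) :
    MonoidAlgebra ℂ Γ :=
  f.coeff.sum fun g a => MonoidAlgebra.single g⁻¹ (starRingEnd ℂ a)

/-- The action `S(h) : N → N`, `n ↦ σ(h) n σ(h)⁻¹`, of the factor system attached to a
section `σ` of the quotient map `G → G/N`. -/
def sectAct (σ : G ⧸ N → G) (h : G ⧸ N) (n : N) : N :=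
  ⟨σ h * (n : G) * (σ h)⁻¹, (inferInstance : N.Normal).conj_mem (n : G) n.2 (σ h)⟩

/-- The factor set `ω(h,h') = σ(h)σ(h')σ(hh')⁻¹ ∈ N` attached to a section `σ` of the
quotient map `G → G/N`. -/
def sectCocycle (σ : G ⧸ N → G) (hσ : ∀ h : G ⧸ N, (σ h : G ⧸ N) = h)
    (h h' : G ⧸ N) : N :=
  ⟨σ h * σ h' * (σ (h * h'))⁻¹, by
    rw [← QuotientGroup.eq_one_iff]
    rw [QuotientGroup.mk_mul, QuotientGroup.mk_mul, QuotientGroup.mk_inv, hσ, hσ, hσ]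
    group⟩

/-- The induced automorphism `S̄(h)` of `ℂ[N]` (conjugation by `δ_{σ(h)}`). -/
noncomputable def sectActAlg (σ : G ⧸ N → G) (h : G ⧸ N)
    (f : MonoidAlgebra ℂ N) : MonoidAlgebra ℂ N :=
  MonoidAlgebra.mapDomain (sectAct N σ h) f

/-- The involution of the crossed product `ℂ[N] ×_{(S,ω)} (G/N)`, given on homogeneous
elements by `(f d_h)* = ω̄(h⁻¹,h)⁻¹ ⋆ S̄(h⁻¹)(f*) d_{h⁻¹}`, where
`ω̄(h⁻¹,h)⁻¹ = δ_{ω(h⁻¹,h)⁻¹}` and `f*` is the usual involution on `ℂ[N]`. -/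
noncomputable def sectCrossedStar (σ : G ⧸ N → G)
    (hσ : ∀ h : G ⧸ N, (σ h : G ⧸ N) = h)
    (F : (G ⧸ N) →₀ MonoidAlgebra ℂ N) : (G ⧸ N) →₀ MonoidAlgebra ℂ N :=
  F.sum fun h f =>
    Finsupp.single h⁻¹
      (MonoidAlgebra.single ((sectCocycle N σ hσ h⁻¹ h)⁻¹) (1 : ℂ) *
        sectActAlg N σ h⁻¹ (grStar f))

/-- The map `Ψ : ℂ[N] ×_{(S,ω)} (G/N) → ℂ[G]`, `Σ_h f_h d_h ↦ Σ_h f_h ⋆ δ_{σ(h)}`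
(the inverse of the isomorphism `Φ` of Theorem `thm:iso`). -/
noncomputable def sectPsi (σ : G ⧸ N → G)
    (F : (G ⧸ N) →₀ MonoidAlgebra ℂ N) : MonoidAlgebra ℂ G :=
  F.sum fun h f =>
    MonoidAlgebra.mapDomainRingHom ℂ N.subtype f * MonoidAlgebra.single (σ h) (1 : ℂ)

lemma grStar_zero {Γ : Type*} [Group Γ] : grStar (0 : MonoidAlgebra ℂ Γ) = 0 := by
  simp [grStar]

lemma grStar_add {Γ : Type*} [Group Γ] (f g : MonoidAlgebra ℂ Γ) :
    grStar (f + g) = grStar f + grStar g := by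
  classical
  rw [grStar, MonoidAlgebra.coeff_add]
  refine Finsupp.sum_add_index (fun a _ => by simp) (fun a _ b₁ b₂ => by
    simp [MonoidAlgebra.single_add, map_add])

lemma grStar_single {Γ : Type*} [Group Γ] (g : Γ) (a : ℂ) :
    grStar (MonoidAlgebra.single g a) = MonoidAlgebra.single g⁻¹ (starRingEnd ℂ a) := by
  classical
  rw [grStar, MonoidAlgebra.coeff_single]
  exact Finsupp.sum_single_index (by simp)

lemma sectPsi_add (σ : G ⧸ N → G) (F F' : (G ⧸ N) →₀ MonoidAlgebra ℂ N) :
    sectPsi N σ (F + F') = sectPsi N σ F + sectPsi N σ F' := by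
  classical
  refine Finsupp.sum_add_index (fun a _ => by simp) (fun a _ b₁ b₂ => by
    simp [map_add, add_mul])

lemma sectPsi_single (σ : G ⧸ N → G) (h : G ⧸ N) (f : MonoidAlgebra ℂ N) :
    sectPsi N σ (Finsupp.single h f) =
      MonoidAlgebra.mapDomainRingHom ℂ N.subtype f * MonoidAlgebra.single (σ h) (1 : ℂ) := by
  classical
  exact Finsupp.sum_single_index (by simp)

lemma sectPsi_single_single (σ : G ⧸ N → G) (h : G ⧸ N) (n : N) (a : ℂ) :
    sectPsi N σ (Finsupp.single h (MonoidAlgebra.single n a)) =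
      MonoidAlgebra.single ((n : G) * σ h) a := by
  classical
  rw [sectPsi_single]
  have : (MonoidAlgebra.mapDomainRingHom ℂ N.subtype) (MonoidAlgebra.single n a) =
      MonoidAlgebra.single (n : G) a := by
    simp [MonoidAlgebra.mapDomainRingHom, Finsupp.mapDomain_single]
  rw [this, MonoidAlgebra.single_mul_single, mul_one]

lemma sectActAlg_add (σ : G ⧸ N → G) (h : G ⧸ N) (f g : MonoidAlgebra ℂ N) :
    sectActAlg N σ h (f + g) = sectActAlg N σ h f + sectActAlg N σ h g :=
  MonoidAlgebra.mapDomain_add _ _ _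

lemma sectCrossedStar_add (σ : G ⧸ N → G) (hσ : ∀ h : G ⧸ N, (σ h : G ⧸ N) = h)
    (F F' : (G ⧸ N) →₀ MonoidAlgebra ℂ N) :
    sectCrossedStar N σ hσ (F + F') =
      sectCrossedStar N σ hσ F + sectCrossedStar N σ hσ F' := by
  classical
  refine Finsupp.sum_add_index (fun a _ => by simp [grStar_zero, sectActAlg])
    (fun a _ b₁ b₂ => by
      rw [grStar_add, sectActAlg_add, mul_add, Finsupp.single_add])

lemma sectCrossedStar_single_single (σ : G ⧸ N → G)
    (hσ : ∀ h : G ⧸ N, (σ h : G ⧸ N) = h) (h : G ⧸ N) (n : N) (a : ℂ) :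
    sectCrossedStar N σ hσ (Finsupp.single h (MonoidAlgebra.single n a)) =
      Finsupp.single h⁻¹
        (MonoidAlgebra.single ((sectCocycle N σ hσ h⁻¹ h)⁻¹ * sectAct N σ h⁻¹ n⁻¹)
          (starRingEnd ℂ a)) := by
  classical
  rw [sectCrossedStar]
  rw [Finsupp.sum_single_index (by simp [grStar_zero, sectActAlg])]
  rw [grStar_single, sectActAlg, MonoidAlgebra.mapDomain_single, MonoidAlgebra.single_mul_single,
    one_mul]

/-- The bijection `(G/N) × N ≃ G`, `(h, n) ↦ n σ(h)`. -/
noncomputable def sectProdEquiv (σ : G ⧸ N → G)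
    (hσ : ∀ h : G ⧸ N, (σ h : G ⧸ N) = h) : (G ⧸ N) × N ≃ G where
  toFun p := (p.2 : G) * σ p.1
  invFun g := (↑g, ⟨g * (σ ↑g)⁻¹, by
    have : ((g * (σ (↑g : G ⧸ N))⁻¹ : G) : G ⧸ N) = 1 := by
      rw [QuotientGroup.mk_mul, QuotientGroup.mk_inv, hσ, mul_inv_cancel]
    exact (QuotientGroup.eq_one_iff _).1 this⟩)
  left_inv p := by
    obtain ⟨h, n⟩ := p
    have hq : (((n : G) * σ h : G) : G ⧸ N) = h := by
      have h1 : (((n : G) : G) : G ⧸ N) = 1 := (QuotientGroup.eq_one_iff _).2 n.2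
      rw [QuotientGroup.mk_mul, h1, one_mul, hσ]
    refine Prod.ext hq ?_
    ext
    simp only
    rw [hq]
    group
  right_inv g := by
    simp

lemma sectPsi_eq (σ : G ⧸ N → G) (hσ : ∀ h : G ⧸ N, (σ h : G ⧸ N) = h) :
    sectPsi N σ = ⇑((Finsupp.mapRange.linearEquiv (MonoidAlgebra.coeffLinearEquiv ℂ)).trans
      ((Finsupp.finsuppProdLEquiv (M := ℂ) ℂ).symm.trans
      ((Finsupp.domLCongr (M := ℂ) (R := ℂ) (sectProdEquiv N σ hσ)).trans
      (MonoidAlgebra.coeffLinearEquiv ℂ).symm))) := by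
  classical
  funext F
  set T := (Finsupp.mapRange.linearEquiv (MonoidAlgebra.coeffLinearEquiv ℂ)).trans
      ((Finsupp.finsuppProdLEquiv (M := ℂ) ℂ).symm.trans
      ((Finsupp.domLCongr (M := ℂ) (R := ℂ) (sectProdEquiv N σ hσ)).trans
      (MonoidAlgebra.coeffLinearEquiv ℂ).symm)) with hT
  induction F using Finsupp.induction with
  | zero => simp [sectPsi, map_zero]
  | single_add h f F hF hf ih =>
    rw [sectPsi_add, ih, map_add]
    congr 1
    clear hF hf ih
    induction f using MonoidAlgebra.induction with
    | zero =>
      rw [Finsupp.single_zero]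
      simp [sectPsi, map_zero]
    | single_add n a f hf ha ih2 =>
      rw [Finsupp.single_add, sectPsi_add, ih2, map_add]
      congr 1
      rw [sectPsi_single_single]
      have huncurry : (Finsupp.finsuppProdLEquiv (M := ℂ) ℂ).symm
          (Finsupp.single h (Finsupp.single n a)) = Finsupp.single (h, n) a := by
        exact Finsupp.uncurry_single h n a
      simp only [hT, LinearEquiv.trans_apply, Finsupp.mapRange.linearEquiv_apply,
        Finsupp.mapRange_single, MonoidAlgebra.coeffLinearEquiv_apply,
        MonoidAlgebra.coeff_single, huncurry, Finsupp.domLCongr_single]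
      rfl

lemma sectStar_key (σ : G ⧸ N → G) (hσ : ∀ h : G ⧸ N, (σ h : G ⧸ N) = h)
    (hσ1 : σ 1 = 1) (F : (G ⧸ N) →₀ MonoidAlgebra ℂ N) :
    grStar (sectPsi N σ F) = sectPsi N σ (sectCrossedStar N σ hσ F) := by
  classical
  induction F using Finsupp.induction with
  | zero => simp [sectPsi, sectCrossedStar, grStar_zero]
  | single_add h f F hF hf ih =>
    rw [sectPsi_add, grStar_add, sectCrossedStar_add, sectPsi_add, ih]
    congr 1
    clear hF hf ih
    induction f using MonoidAlgebra.induction with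
    | zero =>
      rw [Finsupp.single_zero]
      simp [sectPsi, sectCrossedStar, grStar_zero]
    | single_add n a f hf ha ih2 =>
      rw [Finsupp.single_add, sectPsi_add, grStar_add, sectCrossedStar_add, sectPsi_add, ih2]
      congr 1
      rw [sectPsi_single_single, grStar_single, sectCrossedStar_single_single,
        sectPsi_single_single]
      congr 1
      have hω : ((sectCocycle N σ hσ h⁻¹ h : N) : G) = σ h⁻¹ * σ h := by
        simp [sectCocycle, hσ1]
      push_cast [hω, sectAct]
      rw [mul_inv_rev]
      group

/-- For `N ⊴ G`, `H = G/N` with normalized section `σ`, the crossed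
product `ℂ[N] ×_{(S,ω)} H` endowed with the involution
`(f d_h)* = ω̄(h⁻¹,h)⁻¹ ⋆ S̄(h⁻¹)(f*) d_{h⁻¹}` is `*`-isomorphic to `ℂ[G]` with its
natural involution, via the isomorphism `Φ` of Theorem `thm:iso`: equivalently, the
inverse map `Ψ` is bijective and intertwines the involutions,
`Ψ(F)* = Ψ(F*)` for all `F`. -/
theorem statement16 (σ : G ⧸ N → G) (hσ : ∀ h : G ⧸ N, (σ h : G ⧸ N) = h)
    (hσ1 : σ 1 = 1) :
    Function.Bijective (sectPsi N σ) ∧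
    ∀ F : (G ⧸ N) →₀ MonoidAlgebra ℂ N,
      grStar (sectPsi N σ F) = sectPsi N σ (sectCrossedStar N σ hσ F) := by
  constructor
  · rw [sectPsi_eq N σ hσ]
    exact ((Finsupp.mapRange.linearEquiv (MonoidAlgebra.coeffLinearEquiv ℂ)).trans
      ((Finsupp.finsuppProdLEquiv (M := ℂ) ℂ).symm.trans
      ((Finsupp.domLCongr (M := ℂ) (R := ℂ) (sectProdEquiv N σ hσ)).trans
      (MonoidAlgebra.coeffLinearEquiv ℂ).symm))).bijective
  · exact sectStar_key N σ hσ hσ1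

end
end

section
/- Let Z be a torsion-free discrete abelian group. Then the Pontryagin dual group Ẑ = Hom(Z, 𝕋), equipped with the topology of pointwise convergence, is a connected compact Hausdorff topological space. -/
open CategoryTheory

noncomputable section Aux18

lemma aux18_exp_pow (t : ℝ) (n : ℕ) : Circle.exp t ^ n = Circle.exp (n * t) := by
  induction n with
  | zero => simp
  | succ n ih =>
    rw [pow_succ, ih, ← Circle.exp_add]
    congr 1
    push_cast
    ring

lemma aux18_circle_root (x : Circle) {n : ℕ} (hn : n ≠ 0) : ∃ y : Circle, y ^ n = x := by
  refine ⟨Circle.exp (Complex.arg x / n), ?_⟩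
  rw [aux18_exp_pow, mul_div_cancel₀ _ (by exact_mod_cast hn), Circle.exp_arg]

instance : DivisibleBy (Additive Circle) ℕ :=
  divisibleByOfSMulRightSurj _ _ fun {n} hn a => by
    obtain ⟨y, hy⟩ := aux18_circle_root a.toMul hn
    exact ⟨Additive.ofMul y, by
      apply Additive.toMul.injective
      simpa using hy⟩

instance : DivisibleBy (Additive Circle) ℤ :=
  AddGroup.divisibleByIntOfDivisibleByNat _

/-- Lift of the additive circle to an arbitrary universe. -/
abbrev ULiftCircle : Type u := ULift.{u} (Additive Circle)

instance : DivisibleBy ULiftCircle.{u} ℤ where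
  div a n := ⟨DivisibleBy.div a.down n⟩
  div_zero a := ULift.ext _ _ (DivisibleBy.div_zero (α := ℤ) a.down)
  div_cancel {n} a hn := ULift.ext _ _ (DivisibleBy.div_cancel a.down hn)

universe u

lemma aux18_exists_root {Z : Type u} [CommGroup Z] (htf : ∀ g : Z, g ≠ 1 → ¬IsOfFinOrder g)
    (χ : Z →* Circle) {n : ℕ} (hn : n ≠ 0) : ∃ ψ : Z →* Circle, ∀ z, ψ z ^ n = χ z := by
  have hinj : Function.Injective fun z : Z => z ^ n := by
    intro a b hab
    have h1 : (a / b) ^ n = 1 := by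
      simp only at hab
      rw [div_pow, hab, div_self']
    have hfo : IsOfFinOrder (a / b) :=
      isOfFinOrder_iff_pow_eq_one.mpr ⟨n, Nat.pos_of_ne_zero hn, h1⟩
    have hab1 : a / b = 1 := by
      by_contra hne
      exact htf _ hne hfo
    exact div_eq_one.mp hab1
  let f : AddCommGrpCat.of (Additive Z) ⟶ AddCommGrpCat.of (Additive Z) :=
    AddCommGrpCat.ofHom (MonoidHom.toAdditive (powMonoidHom n))
  haveI : Mono f := by
    rw [AddCommGrpCat.mono_iff_injective]
    intro a b hab
    exact Additive.toMul.injective (hinj (congrArg Additive.toMul (by simpa [f] using hab : n • a = n • b)))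
  haveI : Injective (AddCommGrpCat.of ULiftCircle.{u}) := AddCommGrpCat.injective_of_divisible _
  let e : Additive Circle ≃+ ULiftCircle := AddEquiv.ulift.symm
  let g : AddCommGrpCat.of (Additive Z) ⟶ AddCommGrpCat.of ULiftCircle :=
    AddCommGrpCat.ofHom (e.toAddMonoidHom.comp (MonoidHom.toAdditive χ))
  let h : Additive Z →+ ULiftCircle := (Injective.factorThru g f).hom
  refine ⟨MonoidHom.toAdditive.symm ((e.symm.toAddMonoidHom).comp h), fun z => ?_⟩
  have hcomp := Injective.comp_factorThru g f
  have hz : h (Additive.ofMul (z ^ n)) = g (Additive.ofMul z) :=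
    congrArg (fun k => k.hom (Additive.ofMul z)) hcomp
  show Additive.toMul (e.symm (h (Additive.ofMul z))) ^ n = χ z
  have h1 : Additive.ofMul (z ^ n) = n • Additive.ofMul z := ofMul_pow n z
  rw [← toMul_nsmul, ← map_nsmul e.symm, ← map_nsmul h, ← h1, hz]
  simp [g, e]; rfl

lemma aux18_pow_apply {A E : Type*} [Monoid A] [CommGroup E] [TopologicalSpace A]
    [TopologicalSpace E] [IsTopologicalGroup E]
    (f : ContinuousMonoidHom A E) (n : ℕ) (x : A) : (f ^ n) x = f x ^ n := by
  induction n with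
  | zero => rw [pow_zero, pow_zero]; rfl
  | succ n ih => rw [pow_succ, pow_succ, ← ih]; rfl

end Aux18



/-- Let `Z` be a torsion-free discrete abelian group.  Then the
Pontryagin dual `Ẑ = Hom(Z, 𝕋)` (continuous characters into the circle group, which for
discrete `Z` are all characters, with the topology of pointwise convergence) is a
connected compact Hausdorff topological space. -/
theorem statement18 {Z : Type*} [CommGroup Z] [TopologicalSpace Z] [DiscreteTopology Z]
    (htf : ∀ g : Z, g ≠ 1 → ¬IsOfFinOrder g) :
    CompactSpace (PontryaginDual Z) ∧ T2Space (PontryaginDual Z) ∧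
      ConnectedSpace (PontryaginDual Z) := by
  -- compactness
  have hcont : Continuous fun p : (Z → Circle) × Z => p.1 p.2 := by
    rw [continuous_iff_continuousAt]
    rintro ⟨f, z⟩
    have heq : (fun p : (Z → Circle) × Z => p.1 z) =ᶠ[nhds (f, z)]
        fun p : (Z → Circle) × Z => p.1 p.2 := by
      filter_upwards [((isOpen_discrete ({z} : Set Z)).preimage continuous_snd).mem_nhds
        (by simp)] with p hp
      simp only [Set.mem_preimage, Set.mem_singleton_iff] at hp
      rw [hp]
    exact (((continuous_apply z).comp continuous_fst).continuousAt).congr heq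
  have hg : Continuous fun f : Z → Circle =>
      (⟨f, continuous_of_discreteTopology⟩ : C(Z, Circle)) :=
    ContinuousMap.continuous_of_continuous_uncurry _ hcont
  have hsurj : Function.Surjective
      (fun f : Z → Circle => (⟨f, continuous_of_discreteTopology⟩ : C(Z, Circle))) :=
    fun f => ⟨⇑f, by ext x; rfl⟩
  have hcs : CompactSpace C(Z, Circle) := by
    constructor
    rw [← Set.image_univ_of_surjective hsurj]
    exact isCompact_univ.image hg
  haveI := hcs
  haveI hC : CompactSpace (PontryaginDual Z) :=
    (ContinuousMonoidHom.isClosedEmbedding_toContinuousMap Z Circle).compactSpace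
  refine ⟨hC, inferInstance, ?_⟩
  -- divisibility
  have hdiv : ∀ (χ : PontryaginDual Z) (n : ℕ), n ≠ 0 → ∃ ψ : PontryaginDual Z, ψ ^ n = χ := by
    intro χ n hn
    obtain ⟨ψ, hψ⟩ := aux18_exists_root htf χ.toMonoidHom hn
    refine ⟨(⟨ψ, continuous_of_discreteTopology⟩ : PontryaginDual Z), ?_⟩
    exact ContinuousMonoidHom.ext fun z => (aux18_pow_apply (A := Z) (E := Circle) _ n z).trans (hψ z)
  -- connectedness
  have key : ∀ χ : PontryaginDual Z, χ ∈ connectedComponent (1 : PontryaginDual Z) := by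
    intro χ
    rw [connectedComponent_eq_iInter_isClopen]
    refine Set.mem_iInter.mpr fun ⟨W, hW, h1W⟩ => ?_
    obtain ⟨H, hH⟩ :=
      IsTopologicalGroup.exist_openNormalSubgroup_sub_clopen_nhds_of_one hW h1W
    haveI : H.toSubgroup.FiniteIndex := H.toOpenSubgroup.finiteIndex_of_finite_quotient
    obtain ⟨ψ, hψ⟩ := hdiv χ H.toSubgroup.index Subgroup.FiniteIndex.index_ne_zero
    have hmem : ψ ^ H.toSubgroup.index ∈ H.toSubgroup := Subgroup.pow_index_mem _ ψ
    rw [hψ] at hmem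
    exact hH hmem
  have huniv : connectedComponent (1 : PontryaginDual Z) = Set.univ :=
    Set.eq_univ_of_forall key
  haveI : PreconnectedSpace (PontryaginDual Z) :=
    ⟨huniv ▸ isPreconnected_connectedComponent⟩
  exact ⟨⟨1⟩⟩
end
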